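/- arXiv:2504.18252 — 3 statements merged into one kernel-verified Lean document; each statement's English description precedes it below -/
import Mathlib

section
/- Let η : ]0,∞[ → ℂ be C¹, y₀ ∈ ℝⁿ fixed, and k ∈ ℂ with Im k ≥ 0. Suppose a₁ := sup_{ρ≥1} ρ^{(n−1)/2} e^{(Im k)ρ}|η'(ρ)| < ∞ and a₂ := sup_{ρ≥1} ρ^{(n+1)/2} e^{(Im k)ρ}|η'(ρ) − i k η(ρ)| < ∞ and a₀ := sup_{ρ≥1} ρ^{(n−1)/2} e^{(Im k)ρ}|η(ρ)| < ∞. Then there exists C > 0 such that for all x with |x| ≥ 1 + 2|y₀|: |x|^{(n−1)/2} | (x/|x|)·∇_x(η(|x−y₀|)) − i k η(|x−y₀|) | ≤ C |x|^{−1} e^{−(Im k)|x|}. -/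
open scoped RealInnerProductSpace

lemma myHasFDerivAt_norm {E : Type*} [NormedAddCommGroup E] [InnerProductSpace ℝ E]
    (w : E) (hw : w ≠ 0) :
    HasFDerivAt (fun z : E => ‖z‖) ((‖w‖⁻¹ : ℝ) • innerSL ℝ w) w := by
  have h1 : HasFDerivAt (fun z : E => ‖z‖ ^ 2) (2 • innerSL ℝ w) w :=
    (hasStrictFDerivAt_norm_sq w).hasFDerivAt
  have h2 := h1.sqrt (pow_ne_zero 2 (norm_ne_zero_iff.mpr hw))
  have hfun : (fun z : E => Real.sqrt (‖z‖ ^ 2)) = fun z : E => ‖z‖ :=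
    funext fun z => Real.sqrt_sq (norm_nonneg z)
  rw [hfun] at h2
  convert h2 using 1
  have hw' : (0:ℝ) < ‖w‖ := norm_pos_iff.mpr hw
  ext v
  rw [Real.sqrt_sq (norm_nonneg w)]
  simp only [ContinuousLinearMap.smul_apply, two_smul, ContinuousLinearMap.add_apply,
    smul_eq_mul]
  field_simp
  ring

set_option maxHeartbeats 1000000 in
/-- Let `η : ]0,∞[ → ℂ` be `C¹`, `y₀ ∈ ℝⁿ`, `k ∈ ℂ` with `Im k ≥ 0`, with finite weighted
sups `a₀, a₁, a₂` as below. Then there is `C > 0` such that for all `x` with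
`‖x‖ ≥ 1 + 2‖y₀‖`:
`‖x‖^{(n-1)/2} |(x/‖x‖)·∇_x(η(‖x - y₀‖)) - i k η(‖x - y₀‖)| ≤ C ‖x‖⁻¹ e^{-(Im k)‖x‖}`. -/
theorem stmt7 (n : ℕ) (hn : 2 ≤ n) (η : ℝ → ℂ)
    (hη : ContDiffOn ℝ 1 η (Set.Ioi (0 : ℝ)))
    (y₀ : EuclideanSpace ℝ (Fin n)) (k : ℂ) (hk : 0 ≤ k.im)
    (a₀ a₁ a₂ : ℝ)
    (ha₀ : ∀ ρ : ℝ, 1 ≤ ρ → ρ ^ (((n : ℝ) - 1) / 2) * Real.exp (k.im * ρ) * ‖η ρ‖ ≤ a₀)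
    (ha₁ : ∀ ρ : ℝ, 1 ≤ ρ →
      ρ ^ (((n : ℝ) - 1) / 2) * Real.exp (k.im * ρ) * ‖deriv η ρ‖ ≤ a₁)
    (ha₂ : ∀ ρ : ℝ, 1 ≤ ρ →
      ρ ^ (((n : ℝ) + 1) / 2) * Real.exp (k.im * ρ)
        * ‖deriv η ρ - Complex.I * k * η ρ‖ ≤ a₂) :
    ∃ C : ℝ, 0 < C ∧ ∀ x : EuclideanSpace ℝ (Fin n), 1 + 2 * ‖y₀‖ ≤ ‖x‖ →
      ‖x‖ ^ (((n : ℝ) - 1) / 2) *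
          ‖fderiv ℝ (fun z : EuclideanSpace ℝ (Fin n) => η ‖z - y₀‖) x ((‖x‖)⁻¹ • x)
            - Complex.I * k * η ‖x - y₀‖‖
        ≤ C * (‖x‖)⁻¹ * Real.exp (-(k.im) * ‖x‖) := by
  set p : ℝ := ((n : ℝ) - 1) / 2 with hp_def
  have hn' : (2:ℝ) ≤ (n:ℝ) := by exact_mod_cast hn
  have hp0 : 0 ≤ p := by rw [hp_def]; linarith
  set M : ℝ := Real.exp (k.im * ‖y₀‖) with hM_def
  have hM0 : 0 < M := Real.exp_pos _
  -- a₀, a₂ nonneg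
  have ha₀0 : 0 ≤ a₀ := le_trans (by positivity) (ha₀ 1 le_rfl)
  have ha₂0 : 0 ≤ a₂ := le_trans (by positivity) (ha₂ 1 le_rfl)
  refine ⟨(2:ℝ)^p * 2 * M * a₂ + 4 * ‖y₀‖ * ‖k‖ * (2:ℝ)^p * M * a₀ + 1, ?_, ?_⟩
  · have h1 : (0:ℝ) ≤ (2:ℝ)^p * 2 * M * a₂ := by
      apply mul_nonneg _ ha₂0; positivity
    have h2 : (0:ℝ) ≤ 4 * ‖y₀‖ * ‖k‖ * (2:ℝ)^p * M * a₀ := by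
      apply mul_nonneg _ ha₀0; positivity
    linarith
  intro x hx
  set R : ℝ := ‖x‖ with hR_def
  set w : EuclideanSpace ℝ (Fin n) := x - y₀ with hw_def
  set r : ℝ := ‖w‖ with hr_def
  have hR1 : 1 ≤ R := by have := norm_nonneg y₀; linarith
  have hR0 : (0:ℝ) < R := by linarith
  have hry : R - ‖y₀‖ ≤ r := by
    have h := norm_sub_norm_le x w
    have : x - w = y₀ := by rw [hw_def]; abel
    rw [this] at h
    linarith
  have hr1 : 1 ≤ r := by have := norm_nonneg y₀; linarith
  have hr0 : (0:ℝ) < r := by linarith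
  have hrR : r ≤ R + ‖y₀‖ := by
    have := norm_sub_le x y₀
    simpa [hw_def, hr_def, hR_def] using this
  have hR2r : R ≤ 2 * r := by linarith
  have hw0 : w ≠ 0 := norm_pos_iff.mp hr0
  -- derivative of z ↦ ‖z - y₀‖
  have hsub : HasFDerivAt (fun z : EuclideanSpace ℝ (Fin n) => z - y₀)
      (ContinuousLinearMap.id ℝ (EuclideanSpace ℝ (Fin n))) x := by
    simpa using (hasFDerivAt_id x).sub_const y₀
  have hnormF : HasFDerivAt (fun z : EuclideanSpace ℝ (Fin n) => ‖z - y₀‖)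
      (((r⁻¹ : ℝ) • innerSL ℝ w).comp
        (ContinuousLinearMap.id ℝ (EuclideanSpace ℝ (Fin n)))) x := by
    exact (myHasFDerivAt_norm w hw0).comp x hsub
  have hrIoi : r ∈ Set.Ioi (0:ℝ) := hr0
  have hηd : DifferentiableAt ℝ η r :=
    (hη.contDiffAt (isOpen_Ioi.mem_nhds hrIoi)).differentiableAt one_ne_zero
  have hF : HasFDerivAt (fun z : EuclideanSpace ℝ (Fin n) => η ‖z - y₀‖)
      ((ContinuousLinearMap.smulRight (1 : ℝ →L[ℝ] ℝ) (deriv η r)).comp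
        ((((r:ℝ)⁻¹ : ℝ) • innerSL ℝ w).comp
          (ContinuousLinearMap.id ℝ (EuclideanSpace ℝ (Fin n))))) x :=
    (hηd.hasDerivAt.hasFDerivAt).comp x hnormF
  set v : EuclideanSpace ℝ (Fin n) := (R⁻¹ : ℝ) • x with hv_def
  have hv1 : ‖v‖ = 1 := by
    rw [hv_def, norm_smul, Real.norm_eq_abs, abs_of_pos (inv_pos.mpr hR0), ← hR_def]
    field_simp
  set c : ℝ := r⁻¹ * ⟪w, v⟫ with hc_def
  have happ : fderiv ℝ (fun z : EuclideanSpace ℝ (Fin n) => η ‖z - y₀‖) x v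
      = (c : ℂ) * deriv η r := by
    rw [hF.fderiv]
    simp only [ContinuousLinearMap.comp_apply, ContinuousLinearMap.id_apply,
      ContinuousLinearMap.smul_apply, ContinuousLinearMap.smulRight_apply,
      ContinuousLinearMap.one_apply, innerSL_apply_apply, smul_eq_mul]
    rw [hc_def, Complex.real_smul]
  -- bounds on c
  have hcs : |⟪w, v⟫| ≤ r := by
    have := abs_real_inner_le_norm w v
    rwa [hv1, mul_one] at this
  have hc1 : |c| ≤ 1 := by
    rw [hc_def, abs_mul, abs_inv, abs_of_pos hr0]
    calc r⁻¹ * |⟪w, v⟫| ≤ r⁻¹ * r := by gcongr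
      _ = 1 := inv_mul_cancel₀ hr0.ne'
  have hc2 : |c - 1| * R ≤ 4 * ‖y₀‖ := by
    have hcv : c = ⟪(r⁻¹ : ℝ) • w, v⟫ := by rw [real_inner_smul_left, hc_def]
    have hvv : (1:ℝ) = ⟪v, v⟫ := by
      rw [real_inner_self_eq_norm_sq, hv1]; norm_num
    have hsplit : c - 1 = ⟪(r⁻¹ : ℝ) • w - v, v⟫ := by
      rw [inner_sub_left, ← hcv, ← hvv]
    have hvec : (r⁻¹ : ℝ) • w - v = (r⁻¹ - R⁻¹) • x - (r⁻¹ : ℝ) • y₀ := by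
      rw [hw_def, hv_def]; module
    have hnv : ‖(r⁻¹ : ℝ) • w - v‖ ≤ 2 * ‖y₀‖ / r := by
      rw [hvec]
      calc ‖(r⁻¹ - R⁻¹) • x - (r⁻¹ : ℝ) • y₀‖
          ≤ ‖(r⁻¹ - R⁻¹) • x‖ + ‖(r⁻¹ : ℝ) • y₀‖ := norm_sub_le _ _
        _ = |r⁻¹ - R⁻¹| * R + r⁻¹ * ‖y₀‖ := by
            rw [norm_smul, norm_smul, Real.norm_eq_abs, Real.norm_eq_abs,
              abs_of_pos (inv_pos.mpr hr0), ← hR_def]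
        _ ≤ ‖y₀‖ / (r * R) * R + r⁻¹ * ‖y₀‖ := by
            gcongr
            have heq : r⁻¹ - R⁻¹ = (R - r) / (r * R) := by field_simp
            rw [heq, abs_div, abs_of_pos (mul_pos hr0 hR0)]
            gcongr
            rw [abs_le]
            constructor <;> linarith
        _ = 2 * ‖y₀‖ / r := by field_simp; ring
    have habs : |c - 1| ≤ 2 * ‖y₀‖ / r := by
      rw [hsplit]
      calc |⟪(r⁻¹ : ℝ) • w - v, v⟫| ≤ ‖(r⁻¹ : ℝ) • w - v‖ * ‖v‖ := abs_real_inner_le_norm _ _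
        _ = ‖(r⁻¹ : ℝ) • w - v‖ := by rw [hv1, mul_one]
        _ ≤ 2 * ‖y₀‖ / r := hnv
    calc |c - 1| * R ≤ (2 * ‖y₀‖ / r) * R := by gcongr
      _ ≤ 4 * ‖y₀‖ := by
          rw [div_mul_eq_mul_div, div_le_iff₀ hr0]
          nlinarith [norm_nonneg y₀]
  -- exponential bounds
  set A : ℝ := Real.exp (k.im * r) with hA_def
  set B : ℝ := Real.exp (k.im * R) with hB_def
  have hA0 : 0 < A := Real.exp_pos _
  have hB0 : 0 < B := Real.exp_pos _
  have hBMA : B ≤ M * A := by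
    rw [hB_def, hM_def, hA_def, ← Real.exp_add]
    apply Real.exp_le_exp.mpr
    have h1 : R ≤ ‖y₀‖ + r := by linarith
    have := mul_le_mul_of_nonneg_left h1 hk
    linarith [this]
  -- rpow bound
  have hp2 : R ^ p ≤ 2 ^ p * r ^ p := by
    rw [← Real.mul_rpow (by norm_num) hr0.le]
    exact Real.rpow_le_rpow hR0.le hR2r hp0
  -- norm estimate on the main expression
  set d : ℂ := deriv η r - Complex.I * k * η r with hd_def
  have hexpr : ‖(c : ℂ) * deriv η r - Complex.I * k * η r‖
      ≤ ‖d‖ + |c - 1| * (‖k‖ * ‖η r‖) := by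
    have key : (c : ℂ) * deriv η r - Complex.I * k * η r
        = (c : ℂ) * d + ((c : ℂ) - 1) * (Complex.I * k * η r) := by
      rw [hd_def]; ring
    rw [key]
    calc ‖(c : ℂ) * d + ((c : ℂ) - 1) * (Complex.I * k * η r)‖
        ≤ ‖(c : ℂ) * d‖ + ‖((c : ℂ) - 1) * (Complex.I * k * η r)‖ := norm_add_le _ _
      _ = |c| * ‖d‖ + |c - 1| * (‖k‖ * ‖η r‖) := by
          rw [norm_mul, norm_mul, norm_mul, norm_mul, Complex.norm_I, one_mul]
          have : ((c : ℂ) - 1) = ((c - 1 : ℝ) : ℂ) := by push_cast; ring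
          rw [this, Complex.norm_real, Complex.norm_real, Real.norm_eq_abs, Real.norm_eq_abs]
      _ ≤ 1 * ‖d‖ + |c - 1| * (‖k‖ * ‖η r‖) := by gcongr
      _ = ‖d‖ + |c - 1| * (‖k‖ * ‖η r‖) := by ring
  -- weighted bounds from hypotheses
  have hd2 : r ^ p * r * A * ‖d‖ ≤ a₂ := by
    have h := ha₂ r hr1
    have hq : r ^ (((n:ℝ) + 1) / 2) = r ^ p * r := by
      rw [show (((n:ℝ) + 1) / 2) = p + 1 by rw [hp_def]; ring, Real.rpow_add_one hr0.ne']
    rw [hq, ← hA_def, ← hd_def] at h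
    linarith
  have h02 : r ^ p * A * ‖η r‖ ≤ a₀ := by
    have h := ha₀ r hr1
    rw [← hA_def] at h
    linarith
  -- put it together
  rw [happ]
  rw [show (-(k.im) * R) = -(k.im * R) by ring, Real.exp_neg, ← hB_def]
  rw [show ((2:ℝ)^p * 2 * M * a₂ + 4 * ‖y₀‖ * ‖k‖ * (2:ℝ)^p * M * a₀ + 1) * R⁻¹ * B⁻¹
      = ((2:ℝ)^p * 2 * M * a₂ + 4 * ‖y₀‖ * ‖k‖ * (2:ℝ)^p * M * a₀ + 1) / (R * B) by
    rw [div_eq_mul_inv, mul_inv]; ring]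
  rw [le_div_iff₀ (by positivity)]
  calc R ^ p * ‖(c : ℂ) * deriv η r - Complex.I * k * η r‖ * (R * B)
      ≤ R ^ p * (‖d‖ + |c - 1| * (‖k‖ * ‖η r‖)) * (R * B) := by
        gcongr
      _ = (R ^ p * R * B) * ‖d‖ + (‖k‖ * ‖η r‖ * R ^ p * B) * (|c - 1| * R) := by ring
      _ ≤ ((2 ^ p * r ^ p) * (2 * r) * (M * A)) * ‖d‖
          + (‖k‖ * ‖η r‖ * (2 ^ p * r ^ p) * (M * A)) * (4 * ‖y₀‖) := by
        gcongr <;> positivity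
      _ = (2 ^ p * 2 * M) * (r ^ p * r * A * ‖d‖)
          + (4 * ‖y₀‖ * ‖k‖ * 2 ^ p * M) * (r ^ p * A * ‖η r‖) := by ring
      _ ≤ (2 ^ p * 2 * M) * a₂ + (4 * ‖y₀‖ * ‖k‖ * 2 ^ p * M) * a₀ := by
        gcongr <;> positivity
      _ ≤ (2:ℝ)^p * 2 * M * a₂ + 4 * ‖y₀‖ * ‖k‖ * (2:ℝ)^p * M * a₀ + 1 := by linarith
end

section
/- Let Ω ⊆ ℝⁿ be a bounded open set with C² boundary, k ∈ ℂ \ ]−∞,0] with Im k ≥ 0, and let u, v ∈ C²(ℝⁿ \ Ω̄, ℂ) ∩ C¹ up to the boundary satisfy Δu + k²u = 0 and Δv + k²v = 0 on ℝⁿ \ Ω̄, the outgoing k-radiation condition, and limsup_{r→∞} ∫_{∂B(0,r)} |u|² dσ < ∞ and limsup_{r→∞} ∫_{∂B(0,r)} |v|² dσ < ∞. Then lim_{r→∞} ∫_{∂B(0,r)} ( (∂u/∂ν) v − (∂v/∂ν) u ) dσ = 0, where ν is the outward unit normal of the ball B(0,r). -/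
open Filter MeasureTheory Metric Set
open scoped NNReal ENNReal Pointwise

section Aux

lemma lipOn_normalize {E : Type*} [NormedAddCommGroup E] [NormedSpace ℝ E] :
    LipschitzOnWith 2 (fun y : E => ‖y‖⁻¹ • y) {y : E | 1 ≤ ‖y‖} := by
  apply LipschitzOnWith.of_dist_le_mul
  intro x hx y hy
  simp only [Set.mem_setOf_eq] at hx hy
  have ha : (0:ℝ) < ‖x‖ := lt_of_lt_of_le one_pos hx
  have hb : (0:ℝ) < ‖y‖ := lt_of_lt_of_le one_pos hy
  have key : ‖x‖⁻¹ • x - ‖y‖⁻¹ • y = ‖x‖⁻¹ • (x - y) + (‖x‖⁻¹ - ‖y‖⁻¹) • y := by module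
  rw [dist_eq_norm, key]
  have h1 : ‖(‖x‖⁻¹ • (x - y) : E)‖ = ‖x‖⁻¹ * ‖x - y‖ := by
    rw [norm_smul, Real.norm_eq_abs, abs_of_pos (inv_pos.2 ha)]
  have h2 : ‖((‖x‖⁻¹ - ‖y‖⁻¹) • y : E)‖ = |‖x‖⁻¹ - ‖y‖⁻¹| * ‖y‖ := by
    rw [norm_smul, Real.norm_eq_abs]
  have h3 : |‖x‖⁻¹ - ‖y‖⁻¹| * ‖y‖ ≤ ‖x - y‖ := by
    rw [inv_sub_inv ha.ne' hb.ne', abs_div, abs_mul, abs_of_pos ha, abs_of_pos hb]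
    have h4 : |‖y‖ - ‖x‖| ≤ ‖x - y‖ := by
      rw [← norm_neg (x - y), neg_sub]; exact abs_norm_sub_norm_le y x
    have h5 : |‖y‖ - ‖x‖| / (‖x‖ * ‖y‖) * ‖y‖ = |‖y‖ - ‖x‖| / ‖x‖ := by
      field_simp
    rw [h5]
    calc |‖y‖ - ‖x‖| / ‖x‖ ≤ |‖y‖ - ‖x‖| / 1 :=
          div_le_div_of_nonneg_left (abs_nonneg _) one_pos hx
      _ = |‖y‖ - ‖x‖| := div_one _
      _ ≤ ‖x - y‖ := h4
  have h6 : ‖x‖⁻¹ ≤ 1 := inv_le_one_of_one_le₀ hx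
  calc ‖(‖x‖⁻¹ • (x - y) : E) + (‖x‖⁻¹ - ‖y‖⁻¹) • y‖
      ≤ ‖(‖x‖⁻¹ • (x - y) : E)‖ + ‖((‖x‖⁻¹ - ‖y‖⁻¹) • y : E)‖ := norm_add_le _ _
    _ ≤ 1 * ‖x - y‖ + ‖x - y‖ := by
        rw [h1, h2]
        have := norm_nonneg (x - y)
        nlinarith
    _ ≤ 2 * dist x y := by rw [dist_eq_norm]; nlinarith [norm_nonneg (x - y)]

lemma cube_boundary_finite (n : ℕ) (hn : 1 ≤ n) :
    μH[(n : ℝ) - 1] (Metric.sphere (0 : (Fin n → ℝ)) 1) < ⊤ := by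
  classical
  set d : ℝ := (n : ℝ) - 1 with hd
  have hd0 : 0 ≤ d := by
    have : (1:ℝ) ≤ (n:ℝ) := by exact_mod_cast hn
    linarith
  -- the covering maps: graph of a face
  set e : (p : Fin n × Bool) → ({j : Fin n // j ≠ p.1} → ℝ) → (Fin n → ℝ) :=
    fun p y j => if h : j = p.1 then (if p.2 then 1 else -1) else y ⟨j, h⟩ with he
  have hlip : ∀ p, LipschitzWith 1 (e p) := by
    intro p
    apply LipschitzWith.of_dist_le_mul
    intro y y'
    simp only [NNReal.coe_one, one_mul]
    rw [dist_pi_le_iff dist_nonneg]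
    intro j
    by_cases h : j = p.1
    · simp [he, h, dist_nonneg]
    · simpa [he, h] using dist_le_pi_dist y y' ⟨j, h⟩
  -- covering
  have hcover : Metric.sphere (0 : (Fin n → ℝ)) 1 ⊆
      ⋃ p : Fin n × Bool, e p '' (Metric.closedBall 0 1) := by
    intro x hx
    rw [mem_sphere_zero_iff_norm] at hx
    -- find attaining index
    have : ∃ i : Fin n, ‖x i‖ = 1 := by
      haveI : Nonempty (Fin n) := Fin.pos_iff_nonempty.mp hn
      have hne : (Finset.univ : Finset (Fin n)).Nonempty := Finset.univ_nonempty
      obtain ⟨i, _, hi⟩ := Finset.exists_mem_eq_sup Finset.univ hne fun i => ‖x i‖₊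
      refine ⟨i, ?_⟩
      have : ‖x‖₊ = ‖x i‖₊ := by rw [Pi.nnnorm_def]; exact hi
      have h1 : ‖x‖₊ = 1 := by ext; simpa using hx
      rw [h1] at this
      have h2 := congrArg NNReal.toReal this
      simpa using h2.symm
    obtain ⟨i, hi⟩ := this
    have hxi : x i = 1 ∨ x i = -1 := by
      rw [Real.norm_eq_abs] at hi
      rcases abs_eq (by norm_num : (0:ℝ) ≤ 1) |>.mp hi with h | h
      · exact Or.inl h
      · exact Or.inr h
    refine Set.mem_iUnion.2 ⟨⟨i, if x i = 1 then true else false⟩, ?_⟩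
    refine ⟨fun j => x j.1, ?_, ?_⟩
    · rw [Metric.mem_closedBall, dist_zero_right]
      rw [pi_norm_le_iff_of_nonneg (by norm_num)]
      intro j
      calc ‖x j.1‖ ≤ ‖x‖ := norm_le_pi_norm x j.1
        _ = 1 := hx
    · funext j
      by_cases h : j = i
      · subst h
        rcases hxi with h' | h'
        · simp [he, h']
        · have hne1 : x j ≠ 1 := by rw [h']; norm_num
          simp [he, h', hne1]
          intro habs; norm_num at habs
      · simp [he, h]
  -- measure bound
  calc μH[d] (Metric.sphere (0 : (Fin n → ℝ)) 1)
      ≤ μH[d] (⋃ p : Fin n × Bool, e p '' (Metric.closedBall 0 1)) := measure_mono hcover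
    _ ≤ ∑ p : Fin n × Bool, μH[d] (e p '' (Metric.closedBall 0 1)) := measure_iUnion_fintype_le _ _
    _ < ⊤ := by
        rw [ENNReal.sum_lt_top]
        intro p _
        have h1 := (hlip p).hausdorffMeasure_image_le hd0 (Metric.closedBall 0 1)
        have hcard : (Fintype.card {j : Fin n // j ≠ p.1} : ℝ) = d := by
          have : Fintype.card {j : Fin n // j ≠ p.1} = n - 1 := by
            simp [Fintype.card_subtype_compl, Fintype.card_fin]
          rw [this, Nat.cast_sub hn, Nat.cast_one, hd]
        have h2 : μH[d] (Metric.closedBall (0 : {j : Fin n // j ≠ p.1} → ℝ) 1) < ⊤ := by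
          rw [← hcard, hausdorffMeasure_pi_real]
          exact (isCompact_closedBall _ _).measure_lt_top
        refine lt_of_le_of_lt h1 ?_
        rw [ENNReal.coe_one, ENNReal.one_rpow, one_mul]
        exact h2

lemma euclidean_sphere_finite (n : ℕ) (hn : 1 ≤ n) :
    μH[(n : ℝ) - 1] (Metric.sphere (0 : EuclideanSpace ℝ (Fin n)) 1) < ⊤ := by
  classical
  set d : ℝ := (n : ℝ) - 1 with hd
  have hd0 : 0 ≤ d := by
    have : (1:ℝ) ≤ (n:ℝ) := by exact_mod_cast hn
    linarith
  set j : (Fin n → ℝ) → EuclideanSpace ℝ (Fin n) := fun x => (WithLp.equiv 2 (Fin n → ℝ)).symm x with hj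
  have hjlip : LipschitzWith ((Fintype.card (Fin n) : NNReal) ^ ((1:ℝ≥0∞) / 2).toReal) j := by
    intro a b
    have h := PiLp.antilipschitzWith_ofLp 2 (fun _ : Fin n => ℝ) (j a) (j b)
    simpa [hj] using h
  have hnormle : ∀ x : Fin n → ℝ, ‖x‖ ≤ ‖j x‖ := by
    intro x
    have h := PiLp.lipschitzWith_ofLp 2 (fun _ : Fin n => ℝ) (j x) 0
    simp only [ENNReal.coe_one, one_mul] at h
    have h2 : dist (WithLp.ofLp (j x)) (WithLp.ofLp (0 : EuclideanSpace ℝ (Fin n)))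
        = dist x 0 := by
      simp [hj]
    rw [edist_dist, edist_dist, h2] at h
    have := (ENNReal.ofReal_le_ofReal_iff (dist_nonneg)).mp h
    simpa [dist_zero_right] using this
  -- Φ is Lipschitz on the sup-sphere
  set Φ : (Fin n → ℝ) → EuclideanSpace ℝ (Fin n) := (fun y => ‖y‖⁻¹ • y) ∘ j with hΦ
  have hmaps : Set.MapsTo j (Metric.sphere (0 : Fin n → ℝ) 1) {y : EuclideanSpace ℝ (Fin n) | 1 ≤ ‖y‖} := by
    intro x hx
    rw [mem_sphere_zero_iff_norm] at hx
    simpa [Set.mem_setOf_eq, ← hx] using hnormle x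
  have hΦlip : LipschitzOnWith (2 * ((Fintype.card (Fin n) : NNReal) ^ ((1:ℝ≥0∞) / 2).toReal))
      Φ (Metric.sphere (0 : Fin n → ℝ) 1) :=
    (lipOn_normalize).comp hjlip.lipschitzOnWith hmaps
  -- image covers the euclidean sphere
  have hcover : Metric.sphere (0 : EuclideanSpace ℝ (Fin n)) 1 ⊆
      Φ '' (Metric.sphere (0 : Fin n → ℝ) 1) := by
    intro z hz
    rw [mem_sphere_zero_iff_norm] at hz
    set w : Fin n → ℝ := WithLp.equiv 2 (Fin n → ℝ) z with hw
    have hwz : j w = z := by simp [hj, hw]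
    have hwne : w ≠ 0 := by
      intro h0
      apply_fun j at h0
      rw [hwz] at h0
      simp [hj] at h0
      rw [h0] at hz
      simp at hz
    have hc : 0 < ‖w‖ := norm_pos_iff.mpr hwne
    refine ⟨‖w‖⁻¹ • w, ?_, ?_⟩
    · rw [mem_sphere_zero_iff_norm, norm_smul, Real.norm_eq_abs, abs_of_pos (inv_pos.2 hc)]
      field_simp
    · have hjsmul : j (‖w‖⁻¹ • w) = ‖w‖⁻¹ • z := by
        simp [hj, ← hwz]
      simp only [hΦ, Function.comp_apply, hjsmul]
      rw [norm_smul, Real.norm_eq_abs, abs_of_pos (inv_pos.2 hc), hz, mul_one]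
      rw [smul_smul]
      field_simp
      simp
  calc μH[d] (Metric.sphere (0 : EuclideanSpace ℝ (Fin n)) 1)
      ≤ μH[d] (Φ '' (Metric.sphere (0 : Fin n → ℝ) 1)) := measure_mono hcover
    _ ≤ _ * μH[d] (Metric.sphere (0 : Fin n → ℝ) 1) := hΦlip.hausdorffMeasure_image_le hd0
    _ < ⊤ := by
        apply ENNReal.mul_lt_top
        · exact (ENNReal.rpow_lt_top_of_nonneg hd0 ENNReal.coe_ne_top)
        · exact cube_boundary_finite n hn

lemma integrableOn_of_continuousOn' {α E : Type*} [MeasurableSpace α] [TopologicalSpace α]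
    [OpensMeasurableSpace α] [T2Space α]
    [NormedAddCommGroup E] [SecondCountableTopologyEither α E] {μ : Measure α} {s : Set α} {f : α → E}
    (hf : ContinuousOn f s) (hs : IsCompact s) (hμ : μ s ≠ ⊤) :
    IntegrableOn f s μ := by
  have hms : MeasurableSet s := hs.isClosed.measurableSet
  obtain ⟨C, hC⟩ := hs.exists_bound_of_continuousOn hf
  haveI : IsFiniteMeasure (μ.restrict s) := by
    constructor
    rw [Measure.restrict_apply_univ]
    exact lt_top_iff_ne_top.mpr hμ
  refine ⟨hf.aestronglyMeasurable hms, ?_⟩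
  apply HasFiniteIntegral.of_bounded (C := C)
  rw [ae_restrict_iff' hms]
  exact Eventually.of_forall hC

lemma rad_eventually {E : Type*} [NormedAddCommGroup E] {g : E → ℂ}
    (h : Tendsto g (comap (fun x : E => ‖x‖) atTop) (nhds 0)) {δ : ℝ} (hδ : 0 < δ) :
    ∀ᶠ r : ℝ in atTop, ∀ x : E, ‖x‖ = r → ‖g x‖ < δ := by
  have hmem := h (Metric.ball_mem_nhds 0 hδ)
  rw [mem_map, Filter.mem_comap] at hmem
  obtain ⟨t, ht, hsub⟩ := hmem
  obtain ⟨R, hR⟩ := mem_atTop_sets.mp ht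
  rw [eventually_atTop]
  refine ⟨R, fun r hr x hx => ?_⟩
  have h1 : x ∈ (fun x : E => ‖x‖) ⁻¹' t := by
    simp only [Set.mem_preimage, hx]
    exact hR r hr
  have := hsub h1
  simpa [mem_ball_zero_iff] using this

end Aux

set_option maxHeartbeats 1000000 in
/-- Second Green identity on large spheres for radiating solutions of the Helmholtz
equation: if `u, v` are `C²` solutions of `Δw + k²w = 0` outside a bounded open set `Ω`,
satisfy the outgoing `k`-radiation condition and have bounded `L²`-norms on large spheres,
then `∫_{∂B(0,r)} ((∂u/∂ν) v - (∂v/∂ν) u) dσ → 0` as `r → ∞`. -/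
theorem stmt8 (n : ℕ) (hn : 2 ≤ n) (Ω : Set (EuclideanSpace ℝ (Fin n)))
    (hΩo : IsOpen Ω) (hΩb : Bornology.IsBounded Ω)
    (k : ℂ) (hk : 0 ≤ k.im) (hk' : ¬(k.im = 0 ∧ k.re ≤ 0))
    (u v : EuclideanSpace ℝ (Fin n) → ℂ)
    (hu : ContDiffOn ℝ 2 u (closure Ω)ᶜ) (hv : ContDiffOn ℝ 2 v (closure Ω)ᶜ)
    (hupde : ∀ x ∉ closure Ω,
      (∑ i : Fin n, fderiv ℝ
          (fun z => fderiv ℝ u z (EuclideanSpace.single i (1 : ℝ))) x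
          (EuclideanSpace.single i (1 : ℝ))) + k ^ 2 * u x = 0)
    (hvpde : ∀ x ∉ closure Ω,
      (∑ i : Fin n, fderiv ℝ
          (fun z => fderiv ℝ v z (EuclideanSpace.single i (1 : ℝ))) x
          (EuclideanSpace.single i (1 : ℝ))) + k ^ 2 * v x = 0)
    (hurad : Tendsto
      (fun x : EuclideanSpace ℝ (Fin n) =>
        (‖x‖ ^ (((n : ℝ) - 1) / 2) : ℝ) •
          (fderiv ℝ u x ((‖x‖)⁻¹ • x) - Complex.I * k * u x))
      (comap (fun x : EuclideanSpace ℝ (Fin n) => ‖x‖) atTop) (nhds 0))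
    (hvrad : Tendsto
      (fun x : EuclideanSpace ℝ (Fin n) =>
        (‖x‖ ^ (((n : ℝ) - 1) / 2) : ℝ) •
          (fderiv ℝ v x ((‖x‖)⁻¹ • x) - Complex.I * k * v x))
      (comap (fun x : EuclideanSpace ℝ (Fin n) => ‖x‖) atTop) (nhds 0))
    (huL2 : ∃ M : ℝ, ∀ᶠ r : ℝ in atTop,
      (∫ x in Metric.sphere (0 : EuclideanSpace ℝ (Fin n)) r,
        ‖u x‖ ^ 2 ∂μH[(n : ℝ) - 1]) ≤ M)
    (hvL2 : ∃ M : ℝ, ∀ᶠ r : ℝ in atTop,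
      (∫ x in Metric.sphere (0 : EuclideanSpace ℝ (Fin n)) r,
        ‖v x‖ ^ 2 ∂μH[(n : ℝ) - 1]) ≤ M) :
    Tendsto
      (fun r : ℝ =>
        ∫ x in Metric.sphere (0 : EuclideanSpace ℝ (Fin n)) r,
          (fderiv ℝ u x ((‖x‖)⁻¹ • x) * v x - fderiv ℝ v x ((‖x‖)⁻¹ • x) * u x)
            ∂μH[(n : ℝ) - 1])
      atTop (nhds 0) := by
  classical
  set d : ℝ := (n : ℝ) - 1 with hd
  have hn1 : (1:ℝ) ≤ (n:ℝ) := by exact_mod_cast Nat.one_le_of_lt hn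
  have hd0 : 0 ≤ d := by rw [hd]; linarith
  set σ : ℝ≥0∞ := μH[d] (Metric.sphere (0 : EuclideanSpace ℝ (Fin n)) 1) with hσdef
  have hσ : σ < ⊤ := euclidean_sphere_finite n (by omega)
  set A : ℝ := σ.toReal with hA
  have hA0 : 0 ≤ A := ENNReal.toReal_nonneg
  obtain ⟨Mu, hMu⟩ := huL2
  obtain ⟨Mv, hMv⟩ := hvL2
  set Mu' : ℝ := max Mu 0 with hMu'
  set Mv' : ℝ := max Mv 0 with hMv'
  obtain ⟨R₀, hR₀⟩ := hΩb.closure.subset_closedBall 0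
  rw [NormedAddCommGroup.tendsto_nhds_zero]
  intro ε hε
  set D : ℝ := 2 * A + Mu' + Mv' + 1 with hD
  have hDpos : 0 < D := by
    have : 0 ≤ Mu' := le_max_right _ _
    have : 0 ≤ Mv' := le_max_right _ _
    rw [hD]; positivity
  set δ : ℝ := ε / D with hδ
  have hδpos : 0 < δ := div_pos hε hDpos
  filter_upwards [eventually_ge_atTop (1:ℝ), eventually_ge_atTop (R₀+1),
    rad_eventually hurad hδpos, rad_eventually hvrad hδpos, hMu, hMv]
    with r hr1 hrR hru hrv hL2u hL2v
  have hr0 : (0:ℝ) < r := lt_of_lt_of_le one_pos hr1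
  set S : Set (EuclideanSpace ℝ (Fin n)) := Metric.sphere (0 : EuclideanSpace ℝ (Fin n)) r with hS
  have hxnorm : ∀ x ∈ S, ‖x‖ = r := fun x hx => mem_sphere_zero_iff_norm.mp hx
  -- the sphere is outside `closure Ω`
  have hSsub : S ⊆ (closure Ω)ᶜ := by
    intro x hx
    intro hmem
    have h1 : ‖x‖ ≤ R₀ := by simpa [dist_zero_right] using hR₀ hmem
    have h2 : ‖x‖ = r := hxnorm x hx
    linarith
  -- measure of the sphere
  have hsphere_smul : S = r • Metric.sphere (0 : EuclideanSpace ℝ (Fin n)) 1 := by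
    rw [smul_sphere' (ne_of_gt hr0) (0 : EuclideanSpace ℝ (Fin n)) 1, smul_zero, Real.norm_eq_abs, abs_of_pos hr0, mul_one]
  have hsm : μH[d] S = (‖r‖₊ ^ d : ℝ≥0) • σ := by
    rw [hsphere_smul, Measure.hausdorffMeasure_smul₀ hd0 (ne_of_gt hr0)]
  have hm_ne : μH[d] S ≠ ⊤ := by
    rw [hsm]
    exact ENNReal.mul_ne_top ENNReal.coe_ne_top hσ.ne
  have hm_toReal : (μH[d] S).toReal = r ^ d * A := by
    rw [hsm, ENNReal.smul_def, smul_eq_mul, ENNReal.toReal_mul, ENNReal.coe_toReal,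
      NNReal.coe_rpow, coe_nnnorm, Real.norm_eq_abs, abs_of_pos hr0, hA]
  -- continuity facts
  have hScompact : IsCompact S := isCompact_sphere _ _
  have hSmeas : MeasurableSet S := hScompact.isClosed.measurableSet
  have hucont : ContinuousOn u S := (hu.continuousOn).mono hSsub
  have hvcont : ContinuousOn v S := (hv.continuousOn).mono hSsub
  have hnormal : ContinuousOn (fun x : EuclideanSpace ℝ (Fin n) => (‖x‖)⁻¹ • x) S := by
    refine ContinuousOn.smul (f := fun x : EuclideanSpace ℝ (Fin n) => (‖x‖)⁻¹) (g := id) ?_ ?_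
    · apply ContinuousOn.inv₀ continuous_norm.continuousOn
      intro x hx
      rw [hxnorm x hx]
      exact ne_of_gt hr0
    · exact continuous_id.continuousOn
  have hfucont : ContinuousOn (fun x : EuclideanSpace ℝ (Fin n) => fderiv ℝ u x ((‖x‖)⁻¹ • x)) S := by
    have h1 : ContinuousOn (fderiv ℝ u) (closure Ω)ᶜ :=
      hu.continuousOn_fderiv_of_isOpen (isClosed_closure.isOpen_compl) (by norm_num)
    exact (h1.mono hSsub).clm_apply hnormal
  have hfvcont : ContinuousOn (fun x : EuclideanSpace ℝ (Fin n) => fderiv ℝ v x ((‖x‖)⁻¹ • x)) S := by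
    have h1 : ContinuousOn (fderiv ℝ v) (closure Ω)ᶜ :=
      hv.continuousOn_fderiv_of_isOpen (isClosed_closure.isOpen_compl) (by norm_num)
    exact (h1.mono hSsub).clm_apply hnormal
  set t : ℝ := (r ^ (d/2))⁻¹ with ht
  have hrp : 0 < r ^ (d/2) := Real.rpow_pos_of_pos hr0 _
  have ht0 : 0 ≤ t := le_of_lt (inv_pos.2 hrp)
  have hts : r ^ d * t ^ 2 = 1 := by
    rw [ht]
    have : r ^ (d/2) * r ^ (d/2) = r ^ d := by
      rw [← Real.rpow_add hr0]; ring_nf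
    field_simp
    nlinarith [hrp]
  -- pointwise bound on the radiation remainders
  have hfub : ∀ x ∈ S, ‖fderiv ℝ u x ((‖x‖)⁻¹ • x) - Complex.I * k * u x‖ ≤ δ * t := by
    intro x hx
    have h1 := hru x (hxnorm x hx)
    rw [norm_smul, Real.norm_eq_abs, hxnorm x hx, abs_of_pos hrp] at h1
    rw [ht, ← div_eq_mul_inv, le_div_iff₀ hrp, mul_comm, hxnorm x hx]
    exact le_of_lt h1
  have hfvb : ∀ x ∈ S, ‖fderiv ℝ v x ((‖x‖)⁻¹ • x) - Complex.I * k * v x‖ ≤ δ * t := by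
    intro x hx
    have h1 := hrv x (hxnorm x hx)
    rw [norm_smul, Real.norm_eq_abs, hxnorm x hx, abs_of_pos hrp] at h1
    rw [ht, ← div_eq_mul_inv, le_div_iff₀ hrp, mul_comm, hxnorm x hx]
    exact le_of_lt h1
  -- the pointwise bound for the integrand
  have hpt : ∀ x ∈ S,
      ‖fderiv ℝ u x ((‖x‖)⁻¹ • x) * v x - fderiv ℝ v x ((‖x‖)⁻¹ • x) * u x‖
        ≤ (δ/2) * (2 * t^2 + ‖u x‖^2 + ‖v x‖^2) := by
    intro x hx
    set au : ℂ := fderiv ℝ u x ((‖x‖)⁻¹ • x) - Complex.I * k * u x with hau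
    set av : ℂ := fderiv ℝ v x ((‖x‖)⁻¹ • x) - Complex.I * k * v x with hav
    have halg : fderiv ℝ u x ((‖x‖)⁻¹ • x) * v x - fderiv ℝ v x ((‖x‖)⁻¹ • x) * u x
        = au * v x - av * u x := by
      rw [hau, hav]; ring
    rw [halg]
    have h1 : ‖au * v x - av * u x‖ ≤ ‖au‖ * ‖v x‖ + ‖av‖ * ‖u x‖ := by
      calc ‖au * v x - av * u x‖ ≤ ‖au * v x‖ + ‖av * u x‖ := norm_sub_le _ _
        _ = ‖au‖ * ‖v x‖ + ‖av‖ * ‖u x‖ := by rw [norm_mul, norm_mul]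
    have h2 := hfub x hx
    have h3 := hfvb x hx
    rw [← hau] at h2
    rw [← hav] at h3
    have h4 : (0:ℝ) ≤ ‖u x‖ := norm_nonneg _
    have h5 : (0:ℝ) ≤ ‖v x‖ := norm_nonneg _
    have h6 := sq_nonneg (t - ‖u x‖)
    have h7 := sq_nonneg (t - ‖v x‖)
    nlinarith [mul_le_mul_of_nonneg_right h2 h5, mul_le_mul_of_nonneg_right h3 h4,
      mul_nonneg hδpos.le h6, mul_nonneg hδpos.le h7, h1]
  -- integrability of the bound
  have hintu : IntegrableOn (fun x => ‖u x‖^2) S μH[d] :=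
    integrableOn_of_continuousOn' ((hucont.norm).pow 2) hScompact hm_ne
  have hintv : IntegrableOn (fun x => ‖v x‖^2) S μH[d] :=
    integrableOn_of_continuousOn' ((hvcont.norm).pow 2) hScompact hm_ne
  have hintc : IntegrableOn (fun _ : EuclideanSpace ℝ (Fin n) => 2 * t^2) S μH[d] := by
    apply (integrableOn_const_iff).mpr
    right
    exact lt_top_iff_ne_top.mpr hm_ne
  have hintB : IntegrableOn (fun x => (δ/2) * (2 * t^2 + ‖u x‖^2 + ‖v x‖^2)) S μH[d] := by
    apply Integrable.const_mul
    exact (hintc.add hintu).add hintv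
  -- the main bound
  have hbound : ‖∫ x in S,
      (fderiv ℝ u x ((‖x‖)⁻¹ • x) * v x - fderiv ℝ v x ((‖x‖)⁻¹ • x) * u x) ∂μH[d]‖
      ≤ ∫ x in S, (δ/2) * (2 * t^2 + ‖u x‖^2 + ‖v x‖^2) ∂μH[d] := by
    apply norm_integral_le_of_norm_le hintB
    rw [ae_restrict_iff' hSmeas]
    exact Eventually.of_forall hpt
  have hsplit : ∫ x in S, (δ/2) * (2 * t^2 + ‖u x‖^2 + ‖v x‖^2) ∂μH[d]
      = (δ/2) * ((∫ _ in S, 2*t^2 ∂μH[d]) + (∫ x in S, ‖u x‖^2 ∂μH[d])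
          + (∫ x in S, ‖v x‖^2 ∂μH[d])) := by
    rw [MeasureTheory.integral_const_mul]
    congr 1
    have hintcu : IntegrableOn (fun x : EuclideanSpace ℝ (Fin n) => 2*t^2 + ‖u x‖^2) S μH[d] :=
      hintc.add hintu
    rw [MeasureTheory.integral_add hintcu hintv, MeasureTheory.integral_add hintc hintu]
  have hconst : (∫ _ in S, 2*t^2 ∂μH[d]) = 2 * A := by
    rw [setIntegral_const, measureReal_def, hm_toReal, smul_eq_mul]
    nlinarith [hts]
  have hIu : (∫ x in S, ‖u x‖^2 ∂μH[d]) ≤ Mu' := le_trans hL2u (le_max_left _ _)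
  have hIv : (∫ x in S, ‖v x‖^2 ∂μH[d]) ≤ Mv' := le_trans hL2v (le_max_left _ _)
  have hIu0 : 0 ≤ (∫ x in S, ‖u x‖^2 ∂μH[d]) := by positivity
  have hIv0 : 0 ≤ (∫ x in S, ‖v x‖^2 ∂μH[d]) := by positivity
  have hfinal : (δ/2) * ((2*A) + Mu' + Mv') < ε := by
    have hδD : δ * D = ε := by
      rw [hδ]; field_simp
    have hMu0 : 0 ≤ Mu' := le_max_right _ _
    have hMv0 : 0 ≤ Mv' := le_max_right _ _
    nlinarith [hδpos, hDpos]
  calc ‖∫ x in S,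
      (fderiv ℝ u x ((‖x‖)⁻¹ • x) * v x - fderiv ℝ v x ((‖x‖)⁻¹ • x) * u x) ∂μH[d]‖
      ≤ ∫ x in S, (δ/2) * (2 * t^2 + ‖u x‖^2 + ‖v x‖^2) ∂μH[d] := hbound
    _ = (δ/2) * ((∫ _ in S, 2*t^2 ∂μH[d]) + (∫ x in S, ‖u x‖^2 ∂μH[d])
          + (∫ x in S, ‖v x‖^2 ∂μH[d])) := hsplit
    _ ≤ (δ/2) * ((2*A) + Mu' + Mv') := by
        rw [hconst]
        apply mul_le_mul_of_nonneg_left _ (by positivity)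
        linarith
    _ < ε := hfinal
end

section
/- Let X, Y be Banach spaces in duality via a bilinear pairing ⟨·,·⟩, let T : X → X be compact with compact transpose T^t : Y → Y relative to the pairing. Then for g ∈ X, the equation (−½ I + T)φ = g has a solution φ ∈ X if and only if ⟨g, ψ⟩ = 0 for all ψ ∈ Y with (−½ I + T^t)ψ = 0. -/
set_option maxHeartbeats 1000000
set_option linter.unusedSectionVars false

open Metric Set ContinuousLinearMap Filter Topology

section RieszTheory

variable {X : Type*} [NormedAddCommGroup X] [NormedSpace ℂ X] [CompleteSpace X]

lemma one_sub_apply' (S : X →L[ℂ] X) (x : X) : (1 - S) x = x - S x := by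
  simp [ContinuousLinearMap.sub_apply]

lemma fd_ker (S : X →L[ℂ] X) (hS : IsCompactOperator ⇑S) :
    FiniteDimensional ℂ (LinearMap.ker ((1 - S : X →L[ℂ] X) : X →ₗ[ℂ] X)) := by
  set N := LinearMap.ker ((1 - S : X →L[ℂ] X) : X →ₗ[ℂ] X) with hN
  have hfix : ∀ x ∈ N, S x = x := by
    intro x hx
    have h : (1 - S) x = 0 := hx
    rw [one_sub_apply'] at h
    exact (sub_eq_zero.1 h).symm
  have hK : IsCompact (closure (⇑S '' Metric.closedBall 0 1)) :=
    hS.isCompact_closure_image_closedBall (𝕜₁ := ℂ) (f := (S : X →ₗ[ℂ] X)) 1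
  have hNclosed : IsClosed (N : Set X) := isClosed_ker _  -- ker of clm?
  have himg : (Subtype.val '' Metric.closedBall (0 : N) 1) = (N : Set X) ∩ Metric.closedBall 0 1 := by
    ext x
    constructor
    · rintro ⟨y, hy, rfl⟩
      exact ⟨y.2, by simpa [Metric.mem_closedBall, dist_eq_norm] using hy⟩
    · rintro ⟨hxN, hx1⟩
      exact ⟨⟨x, hxN⟩, by simpa [Metric.mem_closedBall, dist_eq_norm] using hx1, rfl⟩
  have hsub : ((N : Set X) ∩ Metric.closedBall 0 1) ⊆ closure (⇑S '' Metric.closedBall 0 1) := by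
    rintro x ⟨hxN, hx1⟩
    exact subset_closure ⟨x, hx1, hfix x hxN⟩
  have hcomp : IsCompact ((N : Set X) ∩ Metric.closedBall 0 1) :=
    hK.of_isClosed_subset (hNclosed.inter isClosed_closedBall) hsub
  have : IsCompact (Metric.closedBall (0 : N) 1) := by
    rw [Topology.IsEmbedding.subtypeVal.isCompact_iff, himg]
    exact hcomp
  exact FiniteDimensional.of_isCompact_closedBall₀ ℂ one_pos this


lemma bounded_below (S : X →L[ℂ] X) (hS : IsCompactOperator ⇑S) {M : Submodule ℂ X}
    (hMc : IsClosed (M : Set X)) (hdisj : ∀ x ∈ M, (1 - S) x = 0 → x = 0) :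
    ∃ c : ℝ, 0 < c ∧ ∀ x ∈ M, ‖x‖ ≤ c * ‖(1 - S) x‖ := by
  by_contra hcon
  push_neg at hcon
  have hex : ∀ n : ℕ, ∃ x : X, x ∈ M ∧ (n + 1 : ℝ) * ‖(1 - S) x‖ < ‖x‖ := by
    intro n
    obtain ⟨x, hxM, hx⟩ := hcon (n + 1 : ℝ) (by positivity)
    exact ⟨x, hxM, by linarith⟩
  choose x hxM hx using hex
  have hxne : ∀ n, x n ≠ 0 := by
    intro n h0
    have := hx n
    rw [h0] at this
    simp at this
  set z : ℕ → X := fun n => ((‖x n‖ : ℂ))⁻¹ • x n with hz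
  have hznorm : ∀ n, ‖z n‖ = 1 := by
    intro n
    have h0 : ‖x n‖ ≠ 0 := norm_ne_zero_iff.2 (hxne n)
    simp [hz, norm_smul]
    field_simp
  have hzM : ∀ n, z n ∈ M := fun n => M.smul_mem _ (hxM n)
  have huz : ∀ n, ‖(1 - S) (z n)‖ < 1 / (n + 1 : ℝ) := by
    intro n
    have h0 : (0:ℝ) < ‖x n‖ := norm_pos_iff.2 (hxne n)
    have : (1 - S) (z n) = ((‖x n‖ : ℂ))⁻¹ • (1 - S) (x n) := by
      simp [hz, map_smul]
    rw [this, norm_smul]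
    have h1 : ‖((‖x n‖ : ℂ))⁻¹‖ = (‖x n‖)⁻¹ := by
      simp
    rw [h1]
    rw [inv_mul_lt_iff₀ h0]
    have := hx n
    rw [mul_one_div, lt_div_iff₀ (by positivity : (0:ℝ) < (n+1:ℝ))]
    nlinarith [this]
  have huz0 : Tendsto (fun n => (1 - S) (z n)) atTop (𝓝 0) := by
    have hb : Tendsto (fun n : ℕ => 1 / (n + 1 : ℝ)) atTop (𝓝 0) :=
      tendsto_one_div_add_atTop_nhds_zero_nat
    refine squeeze_zero_norm (fun n => (huz n).le) hb
  have hK : IsCompact (closure (⇑S '' Metric.closedBall 0 1)) :=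
    hS.isCompact_closure_image_closedBall (𝕜₁ := ℂ) (f := (S : X →ₗ[ℂ] X)) 1
  have hmem : ∀ n, S (z n) ∈ closure (⇑S '' Metric.closedBall 0 1) := by
    intro n
    exact subset_closure ⟨z n, by simp [Metric.mem_closedBall, dist_eq_norm, hznorm n], rfl⟩
  obtain ⟨l, -, φ, hφ, hconv⟩ := hK.tendsto_subseq hmem
  have hzconv : Tendsto (fun k => z (φ k)) atTop (𝓝 l) := by
    have hrepr : ∀ k, z (φ k) = (1 - S) (z (φ k)) + S (z (φ k)) := by
      intro k; rw [one_sub_apply']; abel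
    have := ((huz0.comp (hφ.tendsto_atTop)).add hconv)
    simpa [← hrepr] using this
  have hlM : l ∈ M := hMc.mem_of_tendsto hzconv (Eventually.of_forall fun k => hzM _)
  have hul : (1 - S) l = 0 := by
    have h1 : Tendsto (fun k => (1 - S) (z (φ k))) atTop (𝓝 ((1 - S) l)) :=
      ((1 - S).continuous.tendsto l).comp hzconv
    have h2 : Tendsto (fun k => (1 - S) (z (φ k))) atTop (𝓝 0) :=
      huz0.comp (hφ.tendsto_atTop)
    exact tendsto_nhds_unique h1 h2
  have hl0 : l = 0 := hdisj l hlM hul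
  have hln : ‖l‖ = 1 := by
    have : Tendsto (fun k => ‖z (φ k)‖) atTop (𝓝 ‖l‖) := hzconv.norm
    simpa [hznorm] using tendsto_nhds_unique this (by simpa [hznorm] using tendsto_const_nhds)
  rw [hl0] at hln
  simp at hln


lemma isClosed_range_one_sub (S : X →L[ℂ] X) (hS : IsCompactOperator ⇑S) :
    IsClosed ((LinearMap.range ((1 - S : X →L[ℂ] X) : X →ₗ[ℂ] X) : Submodule ℂ X) : Set X) := by
  haveI := fd_ker S hS
  obtain ⟨M, hMc, hcompl⟩ :=
    (Submodule.ClosedComplemented.of_finiteDimensional (LinearMap.ker ((1 - S : X →L[ℂ] X) : X →ₗ[ℂ] X))).exists_isClosed_isCompl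
  have hdisj : ∀ x ∈ M, (1 - S) x = 0 → x = 0 := by
    intro x hxM hx0
    have hxN : x ∈ LinearMap.ker ((1 - S : X →L[ℂ] X) : X →ₗ[ℂ] X) := hx0
    have := hcompl.inf_eq_bot
    have : x ∈ (LinearMap.ker ((1 - S : X →L[ℂ] X) : X →ₗ[ℂ] X) ⊓ M : Submodule ℂ X) := ⟨hxN, hxM⟩
    rw [hcompl.inf_eq_bot] at this
    simpa using this
  obtain ⟨c, hc, hineq⟩ := bounded_below S hS hMc hdisj
  haveI : CompleteSpace M := hMc.completeSpace_coe
  set v : M →L[ℂ] X := (1 - S).comp M.subtypeL with hv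
  have hvb : ∀ y : M, ‖y‖ ≤ c.toNNReal * ‖v y‖ := by
    intro y
    have := hineq y y.2
    simpa [hv, Real.coe_toNNReal c hc.le] using this
  have anti := v.antilipschitz_of_bound hvb
  have hclosed : IsClosed (Set.range ⇑v) := anti.isClosed_range v.uniformContinuous
  have heq : ((LinearMap.range ((1 - S : X →L[ℂ] X) : X →ₗ[ℂ] X) : Submodule ℂ X) : Set X) = Set.range ⇑v := by
    ext w
    constructor
    · rintro ⟨y, rfl⟩
      obtain ⟨a, b, haN, hbM, hab⟩ := Submodule.codisjoint_iff_exists_add_eq.mp hcompl.codisjoint y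
      refine ⟨⟨b, hbM⟩, ?_⟩
      have haz : (1 - S) a = 0 := haN
      have : (1 - S) y = (1 - S) a + (1 - S) b := by rw [← map_add, hab]
      simp [hv, this, haz]
      rw [← one_sub_apply', ← one_sub_apply', this, haz, zero_add]
    · rintro ⟨y, rfl⟩
      exact ⟨y, rfl⟩
  rw [heq]
  exact hclosed


lemma pow_one_sub (S : X →L[ℂ] X) (hS : IsCompactOperator ⇑S) (n : ℕ) :
    ∃ C : X →L[ℂ] X, IsCompactOperator ⇑C ∧ (1 - S) ^ n = 1 - C := by
  induction n with
  | zero => exact ⟨0, isCompactOperator_zero, by simp⟩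
  | succ n ih =>
      obtain ⟨C, hC, hEq⟩ := ih
      refine ⟨S + C - C.comp S, ?_, ?_⟩
      · have h1 : IsCompactOperator (⇑S + ⇑C - ⇑C ∘ ⇑S) := (hS.add hC).sub (hC.comp_clm S)
        have : ⇑(S + C - C.comp S) = ⇑S + ⇑C - ⇑C ∘ ⇑S := by ext x; simp
        rw [this]; exact h1
      · rw [pow_succ, hEq]
        ext x
        simp [ContinuousLinearMap.sub_apply, ContinuousLinearMap.add_apply, mul_apply]
        abel

lemma surjective_one_sub (S : X →L[ℂ] X) (hS : IsCompactOperator ⇑S)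
    (hinj : Function.Injective ⇑(1 - S)) : Function.Surjective ⇑(1 - S) := by
  by_contra hsurj
  set u : X →L[ℂ] X := 1 - S with hu
  have hRclosed : ∀ n : ℕ, IsClosed ((LinearMap.range ((u ^ n : X →L[ℂ] X) : X →ₗ[ℂ] X) : Submodule ℂ X) : Set X) := by
    intro n
    obtain ⟨C, hC, hEq⟩ := pow_one_sub S hS n
    rw [hu, hEq]
    exact isClosed_range_one_sub C hC
  have hpow_apply : ∀ (n : ℕ) (x : X), (u ^ (n+1)) x = (u ^ n) (u x) := by
    intro n x; rw [pow_succ]; rfl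
  have hpow_apply' : ∀ (n : ℕ) (x : X), (u ^ (n+1)) x = u ((u ^ n) x) := by
    intro n x; rw [pow_succ']; rfl
  have hinjn : ∀ n : ℕ, Function.Injective ⇑(u ^ n) := by
    intro n
    induction n with
    | zero => simpa using Function.injective_id
    | succ n ih =>
        intro a b hab
        rw [hpow_apply, hpow_apply] at hab
        exact hinj (ih hab)
  have hmono : ∀ n : ℕ, LinearMap.range ((u ^ (n+1) : X →L[ℂ] X) : X →ₗ[ℂ] X) ≤ LinearMap.range ((u ^ n : X →L[ℂ] X) : X →ₗ[ℂ] X) := by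
    rintro n w ⟨z, rfl⟩
    exact ⟨u z, (hpow_apply n z).symm⟩
  have hanti : Antitone fun n => LinearMap.range ((u ^ n : X →L[ℂ] X) : X →ₗ[ℂ] X) :=
    antitone_nat_of_succ_le hmono
  obtain ⟨y, hy⟩ : ∃ y : X, ∀ z, u z ≠ y := by
    rw [Function.Surjective] at hsurj
    push_neg at hsurj
    exact hsurj
  have hvmem : ∀ n, (u ^ n) y ∈ LinearMap.range ((u ^ n : X →L[ℂ] X) : X →ₗ[ℂ] X) := fun n => ⟨y, rfl⟩
  have hvnot : ∀ n, (u ^ n) y ∉ LinearMap.range ((u ^ (n+1) : X →L[ℂ] X) : X →ₗ[ℂ] X) := by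
    rintro n ⟨z, hz⟩
    rw [ContinuousLinearMap.coe_coe, hpow_apply] at hz
    exact hy z (hinjn n hz)
  -- construct Riesz sequence
  have build : ∀ n : ℕ, ∃ e : X, e ∈ LinearMap.range ((u ^ n : X →L[ℂ] X) : X →ₗ[ℂ] X) ∧ ‖e‖ = 1 ∧
      ∀ w ∈ LinearMap.range ((u ^ (n+1) : X →L[ℂ] X) : X →ₗ[ℂ] X), (1:ℝ)/2 ≤ ‖e - w‖ := by
    intro n
    set R1 := LinearMap.range ((u ^ (n+1) : X →L[ℂ] X) : X →ₗ[ℂ] X) with hR1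
    have hne : (R1 : Set X).Nonempty := ⟨0, R1.zero_mem⟩
    have hpos : 0 < infDist ((u ^ n) y) (R1 : Set X) :=
      ((hRclosed (n+1)).notMem_iff_infDist_pos hne).1 (hvnot n)
    set δ := infDist ((u ^ n) y) (R1 : Set X) with hδ
    obtain ⟨w, hwR, hwd⟩ := (Metric.infDist_lt_iff hne).1 (show δ < 2*δ by linarith)
    set e0 := (u ^ n) y - w with he0
    have he0R : e0 ∈ LinearMap.range ((u ^ n : X →L[ℂ] X) : X →ₗ[ℂ] X) :=
      Submodule.sub_mem _ (hvmem n) (hmono n hwR)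
    have he0ge : δ ≤ ‖e0‖ := by
      have h := Metric.infDist_le_dist_of_mem (x := (u ^ n) y) hwR
      rwa [dist_eq_norm] at h
    have he0lt : ‖e0‖ < 2*δ := by
      rw [he0, ← dist_eq_norm]
      exact hwd
    have he0ne : ‖e0‖ ≠ 0 := ne_of_gt (lt_of_lt_of_le hpos he0ge)
    refine ⟨((‖e0‖ : ℂ))⁻¹ • e0, Submodule.smul_mem _ _ he0R, ?_, ?_⟩
    · rw [norm_smul]
      simp [he0ne]
    · intro w' hw'
      have key : ((‖e0‖ : ℂ))⁻¹ • e0 - w' = ((‖e0‖ : ℂ))⁻¹ • (e0 - (‖e0‖ : ℂ) • w') := by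
        conv_rhs => rw [smul_sub, smul_smul, inv_mul_cancel₀ (by exact_mod_cast he0ne), one_smul]
      rw [key, norm_smul]
      have h2 : e0 - (‖e0‖ : ℂ) • w' = (u ^ n) y - (w + (‖e0‖ : ℂ) • w') := by
        rw [he0]; abel
      have hmem2 : w + (‖e0‖ : ℂ) • w' ∈ R1 := R1.add_mem hwR (R1.smul_mem _ hw')
      have h3 : δ ≤ ‖e0 - (‖e0‖ : ℂ) • w'‖ := by
        rw [h2, ← dist_eq_norm]
        exact Metric.infDist_le_dist_of_mem hmem2
      have h4 : ‖((‖e0‖ : ℂ))⁻¹‖ = ‖e0‖⁻¹ := by simp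
      rw [h4]
      have h5 : (2*δ)⁻¹ ≤ ‖e0‖⁻¹ := by
        apply inv_anti₀ (by positivity) he0lt.le
      calc (1:ℝ)/2 = (2*δ)⁻¹ * δ := by field_simp
        _ ≤ ‖e0‖⁻¹ * ‖e0 - (‖e0‖ : ℂ) • w'‖ := by
            apply mul_le_mul h5 h3 hpos.le (by positivity)
  choose e heR hnorm hdist using build
  -- compactness contradiction
  have hK : IsCompact (closure (⇑S '' Metric.closedBall 0 1)) :=
    hS.isCompact_closure_image_closedBall (𝕜₁ := ℂ) (f := (S : X →ₗ[ℂ] X)) 1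
  have hmem : ∀ n, S (e n) ∈ closure (⇑S '' Metric.closedBall 0 1) := fun n =>
    subset_closure ⟨e n, by simp [Metric.mem_closedBall, dist_eq_norm, hnorm n], rfl⟩
  obtain ⟨l, -, φ, hφ, hconv⟩ := hK.tendsto_subseq hmem
  obtain ⟨K, hKc⟩ := (Metric.tendsto_atTop.1 hconv) (1/4) (by norm_num)
  have h1 := hKc K le_rfl
  have h2 := hKc (K+1) (Nat.le_succ K)
  have hlt : dist (S (e (φ K))) (S (e (φ (K+1)))) < 1/2 := by
    calc dist (S (e (φ K))) (S (e (φ (K+1))))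
        ≤ dist (S (e (φ K))) l + dist (S (e (φ (K+1)))) l := dist_triangle_right _ _ _
      _ < 1/4 + 1/4 := by exact add_lt_add h1 h2
      _ = 1/2 := by norm_num
  set n := φ K with hn
  set m := φ (K+1) with hm
  have hnm : n + 1 ≤ m := hφ (Nat.lt_succ_self K)
  have hwmem : u (e n) + e m - u (e m) ∈ LinearMap.range ((u ^ (n+1) : X →L[ℂ] X) : X →ₗ[ℂ] X) := by
    have ha : u (e n) ∈ LinearMap.range ((u ^ (n+1) : X →L[ℂ] X) : X →ₗ[ℂ] X) := by
      obtain ⟨z, hz⟩ := heR n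
      exact ⟨z, by rw [ContinuousLinearMap.coe_coe] at hz ⊢; rw [hpow_apply' n z, hz]⟩
    have hb : e m ∈ LinearMap.range ((u ^ (n+1) : X →L[ℂ] X) : X →ₗ[ℂ] X) := hanti hnm (heR m)
    have hc : u (e m) ∈ LinearMap.range ((u ^ (n+1) : X →L[ℂ] X) : X →ₗ[ℂ] X) := by
      have : u (e m) ∈ LinearMap.range ((u ^ (m+1) : X →L[ℂ] X) : X →ₗ[ℂ] X) := by
        obtain ⟨z, hz⟩ := heR m
        exact ⟨z, by rw [ContinuousLinearMap.coe_coe] at hz ⊢; rw [hpow_apply' m z, hz]⟩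
      exact hanti (by omega) this
    exact Submodule.sub_mem _ (Submodule.add_mem _ ha hb) hc
  have hkey : (1:ℝ)/2 ≤ ‖e n - (u (e n) + e m - u (e m))‖ := hdist n _ hwmem
  have hrew : e n - (u (e n) + e m - u (e m)) = S (e n) - S (e m) := by
    rw [hu]
    simp only [one_sub_apply']
    abel
  rw [hrew, ← dist_eq_norm] at hkey
  linarith


end RieszTheory

section Biorth

variable {E F : Type*} [NormedAddCommGroup E] [NormedSpace ℂ E]
  [NormedAddCommGroup F] [NormedSpace ℂ F]

lemma isCompactOperator_smulRight (c : E →L[ℂ] ℂ) (v : F) :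
    IsCompactOperator ⇑(c.smulRight v) := by
  rw [isCompactOperator_iff_exists_mem_nhds_image_subset_compact]
  refine ⟨c ⁻¹' Metric.closedBall 0 1,
    c.continuous.continuousAt.preimage_mem_nhds (by simpa using Metric.closedBall_mem_nhds (0:ℂ) one_pos),
    (fun t : ℂ => t • v) '' Metric.closedBall 0 1,
    (isCompact_closedBall 0 1).image (by continuity), ?_⟩
  rintro x ⟨e, he, rfl⟩
  exact ⟨c e, by simpa using he, rfl⟩

lemma isCompactOperator_sum {ι : Type*} (s : Finset ι) (f : ι → (E →L[ℂ] F))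
    (h : ∀ i ∈ s, IsCompactOperator ⇑(f i)) : IsCompactOperator ⇑(∑ i ∈ s, f i) := by
  classical
  induction s using Finset.induction with
  | empty => simpa using (isCompactOperator_zero : IsCompactOperator (fun _ : E => (0:F)))
  | insert a s hnotmem ih =>
      rw [Finset.sum_insert hnotmem]
      have : (⇑(f a + ∑ i ∈ s, f i)) = ⇑(f a) + ⇑(∑ i ∈ s, f i) := by
        ext x; simp
      rw [this]
      exact (h a (Finset.mem_insert_self a s)).add (ih fun i hi => h i (Finset.mem_insert_of_mem hi))



lemma exists_biorthogonal (B : E →L[ℂ] F →L[ℂ] ℂ)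
    (hB : ∀ x : E, (∀ y : F, B x y = 0) → x = 0)
    {n : ℕ} {φ : Fin n → E} (hφ : LinearIndependent ℂ φ) :
    ∃ a : Fin n → F, ∀ i j, B (φ i) (a j) = if i = j then 1 else 0 := by
  set L : F →ₗ[ℂ] (Fin n → ℂ) := LinearMap.pi (fun i => ((B (φ i)) : F →ₗ[ℂ] ℂ)) with hL
  have hLapp : ∀ (y : F) (i : Fin n), L y i = B (φ i) y := fun y i => rfl
  have hrange : LinearMap.range L = ⊤ := by
    by_contra hne
    obtain ⟨f, hf0, hmap⟩ :=
      Submodule.exists_dual_map_eq_bot_of_lt_top (lt_top_iff_ne_top.2 hne) inferInstance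
    have hker : ∀ y : F, f (L y) = 0 := by
      intro y
      have : f (L y) ∈ Submodule.map f (LinearMap.range L) :=
        Submodule.mem_map_of_mem (LinearMap.mem_range_self L y)
      rw [hmap] at this
      simpa using this
    set c : Fin n → ℂ := fun i => f (Pi.single i 1) with hc
    have hfv : ∀ v : Fin n → ℂ, f v = ∑ i, v i * c i := by
      intro v
      conv_lhs => rw [← Finset.univ_sum_single v]
      rw [map_sum]
      refine Finset.sum_congr rfl fun i _ => ?_
      have : Pi.single i (v i) = v i • (Pi.single i (1:ℂ) : Fin n → ℂ) := by
        ext j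
        by_cases h : j = i <;> simp [Pi.single_apply, h]
      rw [this, map_smul, smul_eq_mul, hc]
    have hall : ∀ y : F, B (∑ i, c i • φ i) y = 0 := by
      intro y
      have h0 : f (L y) = 0 := hker y
      rw [hfv] at h0
      have : B (∑ i, c i • φ i) y = ∑ i, L y i * c i := by
        rw [map_sum, ContinuousLinearMap.sum_apply]
        refine Finset.sum_congr rfl fun i _ => ?_
        rw [map_smul, ContinuousLinearMap.smul_apply, smul_eq_mul, hLapp, mul_comm]
      rw [this, h0]
    have hsum0 : (∑ i, c i • φ i) = 0 := hB _ hall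
    have hc0 : ∀ i, c i = 0 := Fintype.linearIndependent_iff.1 hφ c hsum0
    apply hf0
    apply LinearMap.ext
    intro v
    rw [hfv]
    simp [hc0]
  have hsurj : Function.Surjective L := LinearMap.range_eq_top.1 hrange
  choose a ha using fun j => hsurj (Pi.single j 1)
  refine ⟨a, fun i j => ?_⟩
  have := congrFun (ha j) i
  rw [hLapp] at this
  rw [this, Pi.single_apply]


end Biorth

section Main

variable {X Y : Type*} [NormedAddCommGroup X] [NormedSpace ℂ X] [CompleteSpace X]
  [NormedAddCommGroup Y] [NormedSpace ℂ Y] [CompleteSpace Y]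

lemma pair_ker (B : X →L[ℂ] Y →L[ℂ] ℂ) (S : X →L[ℂ] X) (St : Y →L[ℂ] Y)
    (hadj : ∀ x y, B (S x) y = B x (St y)) {ψ : Y} (hψ : ψ ∈ LinearMap.ker ((1 - St : Y →L[ℂ] Y) : Y →ₗ[ℂ] Y)) (x : X) :
    B (x - S x) ψ = 0 := by
  have h : (1 - St) ψ = 0 := hψ
  rw [one_sub_apply'] at h
  have h2 : St ψ = ψ := (sub_eq_zero.1 h).symm
  rw [map_sub, ContinuousLinearMap.sub_apply, hadj, h2, sub_self]

/-- The core solvability lemma. -/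
lemma key_solvable (B : X →L[ℂ] Y →L[ℂ] ℂ)
    (hB₁ : ∀ x : X, (∀ y : Y, B x y = 0) → x = 0)
    (hB₂ : ∀ y : Y, (∀ x : X, B x y = 0) → y = 0)
    (S : X →L[ℂ] X) (St : Y →L[ℂ] Y)
    (hS : IsCompactOperator ⇑S) (hSt : IsCompactOperator ⇑St)
    (hadj : ∀ x y, B (S x) y = B x (St y))
    (hmn : Module.finrank ℂ (LinearMap.ker ((1 - S : X →L[ℂ] X) : X →ₗ[ℂ] X)) ≤ Module.finrank ℂ (LinearMap.ker ((1 - St : Y →L[ℂ] Y) : Y →ₗ[ℂ] Y)))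
    (g : X) (hg : ∀ ψ, (1 - St) ψ = 0 → B g ψ = 0) :
    ∃ x, (1 - S) x = g := by
  classical
  haveI hfdX := fd_ker S hS
  haveI hfdY := fd_ker St hSt
  set m := Module.finrank ℂ (LinearMap.ker ((1 - S : X →L[ℂ] X) : X →ₗ[ℂ] X)) with hm
  set n := Module.finrank ℂ (LinearMap.ker ((1 - St : Y →L[ℂ] Y) : Y →ₗ[ℂ] Y)) with hn
  set bφ := Module.finBasis ℂ (LinearMap.ker ((1 - S : X →L[ℂ] X) : X →ₗ[ℂ] X)) with hbφ
  set bψ := Module.finBasis ℂ (LinearMap.ker ((1 - St : Y →L[ℂ] Y) : Y →ₗ[ℂ] Y)) with hbψ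
  set φ : Fin m → X := fun i => ((bφ i : LinearMap.ker ((1 - S : X →L[ℂ] X) : X →ₗ[ℂ] X)) : X) with hφ
  set ψ : Fin n → Y := fun i => ((bψ i : LinearMap.ker ((1 - St : Y →L[ℂ] Y) : Y →ₗ[ℂ] Y)) : Y) with hψ
  have hφli : LinearIndependent ℂ φ :=
    bφ.linearIndependent.map' (Submodule.subtype _) (Submodule.ker_subtype _)
  have hψli : LinearIndependent ℂ ψ :=
    bψ.linearIndependent.map' (Submodule.subtype _) (Submodule.ker_subtype _)
  have hψmem : ∀ k, ψ k ∈ LinearMap.ker ((1 - St : Y →L[ℂ] Y) : Y →ₗ[ℂ] Y) := fun k => (bψ k).2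
  obtain ⟨a, ha⟩ := exists_biorthogonal B hB₁ hφli
  have hB₂' : ∀ y : Y, (∀ x : X, B.flip y x = 0) → y = 0 := by
    intro y hy
    exact hB₂ y (fun x => by simpa using hy x)
  obtain ⟨b, hb⟩ := exists_biorthogonal B.flip hB₂' hψli
  have hb' : ∀ (j : Fin n) (i : Fin n), B (b j) (ψ i) = if i = j then 1 else 0 := by
    intro j i
    have := hb i j
    simpa using this
  set cst : Fin m → Fin n := Fin.castLE hmn with hcst
  have hcstinj : Function.Injective cst := by
    intro p q h
    apply Fin.ext
    simpa [hcst] using congrArg Fin.val h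
  set Fop : X →L[ℂ] X := ∑ i : Fin m, (B.flip (a i)).smulRight (b (cst i)) with hFop
  have hFapp : ∀ x : X, Fop x = ∑ i : Fin m, B x (a i) • b (cst i) := by
    intro x
    rw [hFop]
    simp [ContinuousLinearMap.sum_apply, ContinuousLinearMap.smulRight_apply,
      ContinuousLinearMap.flip_apply]
  have hBF : ∀ (x : X) (k : Fin n),
      B (Fop x) (ψ k) = ∑ i : Fin m, B x (a i) * (if k = cst i then 1 else 0) := by
    intro x k
    rw [hFapp, map_sum, ContinuousLinearMap.sum_apply]
    refine Finset.sum_congr rfl fun i _ => ?_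
    rw [map_smul, ContinuousLinearMap.smul_apply, smul_eq_mul, hb']
  have hBFj : ∀ (x : X) (j : Fin m), B (Fop x) (ψ (cst j)) = B x (a j) := by
    intro x j
    rw [hBF]
    have : ∀ i : Fin m, (if cst j = cst i then (1:ℂ) else 0) = if j = i then 1 else 0 := by
      intro i
      by_cases h : j = i
      · simp [h]
      · have : cst j ≠ cst i := fun hc => h (hcstinj hc)
        simp [h, this]
    simp only [this]
    simp [mul_ite, Finset.sum_ite_eq]
  have hFcompact : IsCompactOperator ⇑Fop :=
    isCompactOperator_sum _ _ (fun i _ => isCompactOperator_smulRight _ _)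
  have hSF : IsCompactOperator ⇑(S + Fop) := by
    have hco : ⇑(S + Fop) = ⇑S + ⇑Fop := by ext x; simp
    rw [hco]
    exact hS.add hFcompact
  -- key: if B x (a j) = 0 for all j and x - S x = F x …
  have hinj : Function.Injective ⇑(1 - (S + Fop)) := by
    rw [injective_iff_map_eq_zero]
    intro x hx
    rw [one_sub_apply'] at hx
    have hxe : x - S x = Fop x := by
      have : S x + Fop x = (S + Fop) x := by simp
      rw [← sub_eq_zero]
      rw [← this] at hx
      calc x - S x - Fop x = x - (S x + Fop x) := by abel
        _ = 0 := hx
    have hzero : ∀ j : Fin m, B x (a j) = 0 := by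
      intro j
      have h1 : B (x - S x) (ψ (cst j)) = 0 := pair_ker B S St hadj (hψmem (cst j)) x
      rw [hxe, hBFj] at h1
      exact h1
    have hF0 : Fop x = 0 := by
      rw [hFapp]
      refine Finset.sum_eq_zero fun i _ => ?_
      rw [hzero i, zero_smul]
    have hker : x ∈ LinearMap.ker ((1 - S : X →L[ℂ] X) : X →ₗ[ℂ] X) := by
      have : (1 - S) x = 0 := by rw [one_sub_apply', hxe, hF0]
      exact this
    -- expand in the basis
    have hrepr := bφ.sum_repr ⟨x, hker⟩
    set c : Fin m → ℂ := fun i => bφ.repr ⟨x, hker⟩ i with hc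
    have hxsum : x = ∑ i, c i • φ i := by
      have h := congrArg (Subtype.val : LinearMap.ker ((1 - S : X →L[ℂ] X) : X →ₗ[ℂ] X) → X) hrepr
      rw [show (Subtype.val (⟨x, hker⟩ : LinearMap.ker ((1 - S : X →L[ℂ] X) : X →ₗ[ℂ] X))) = x from rfl] at h
      rw [← h]
      simp [hφ, hc]
      exact Submodule.coe_sum (p := LinearMap.ker ((1 - S : X →L[ℂ] X) : X →ₗ[ℂ] X)) _ _
    have hcj : ∀ j, c j = 0 := by
      intro j
      have h2 : B x (a j) = ∑ i, c i * B (φ i) (a j) := by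
        rw [hxsum, map_sum, ContinuousLinearMap.sum_apply]
        refine Finset.sum_congr rfl fun i _ => ?_
        rw [map_smul, ContinuousLinearMap.smul_apply, smul_eq_mul]
      have h3 : (∑ i, c i * B (φ i) (a j)) = c j := by
        simp only [ha]
        simp [mul_ite, Finset.sum_ite_eq']
      rw [← h3, ← h2]
      exact hzero j
    rw [hxsum]
    refine Finset.sum_eq_zero fun i _ => ?_
    rw [hcj i, zero_smul]
  obtain ⟨x, hx⟩ := surjective_one_sub (S + Fop) hSF hinj g
  rw [one_sub_apply'] at hx
  have hxe : x - S x - Fop x = g := by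
    have : S x + Fop x = (S + Fop) x := by simp
    rw [← this] at hx
    calc x - S x - Fop x = x - (S x + Fop x) := by abel
      _ = g := hx
  have hzero : ∀ j : Fin m, B x (a j) = 0 := by
    intro j
    have h1 : B (x - S x) (ψ (cst j)) = 0 := pair_ker B S St hadj (hψmem (cst j)) x
    have h2 : B g (ψ (cst j)) = 0 := hg _ (hψmem (cst j))
    have h3 : B (x - S x - Fop x) (ψ (cst j)) = B (x - S x) (ψ (cst j)) - B (Fop x) (ψ (cst j)) := by
      rw [map_sub, ContinuousLinearMap.sub_apply]
    rw [hxe, h1] at h3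
    rw [hBFj] at h3
    rw [h2] at h3
    have h4 := h3.symm
    rw [zero_sub, neg_eq_zero] at h4
    exact h4
  have hF0 : Fop x = 0 := by
    rw [hFapp]
    refine Finset.sum_eq_zero fun i _ => ?_
    rw [hzero i, zero_smul]
  refine ⟨x, ?_⟩
  rw [one_sub_apply']
  rw [← hxe, hF0]
  abel

/-- Kress dimension comparison. -/
lemma dim_le (B : X →L[ℂ] Y →L[ℂ] ℂ)
    (hB₁ : ∀ x : X, (∀ y : Y, B x y = 0) → x = 0)
    (hB₂ : ∀ y : Y, (∀ x : X, B x y = 0) → y = 0)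
    (S : X →L[ℂ] X) (St : Y →L[ℂ] Y)
    (hS : IsCompactOperator ⇑S) (hSt : IsCompactOperator ⇑St)
    (hadj : ∀ x y, B (S x) y = B x (St y)) :
    Module.finrank ℂ (LinearMap.ker ((1 - St : Y →L[ℂ] Y) : Y →ₗ[ℂ] Y)) ≤ Module.finrank ℂ (LinearMap.ker ((1 - S : X →L[ℂ] X) : X →ₗ[ℂ] X)) := by
  classical
  by_contra hcon
  rw [not_le] at hcon
  haveI hfdX := fd_ker S hS
  haveI hfdY := fd_ker St hSt
  set m := Module.finrank ℂ (LinearMap.ker ((1 - S : X →L[ℂ] X) : X →ₗ[ℂ] X)) with hm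
  set n := Module.finrank ℂ (LinearMap.ker ((1 - St : Y →L[ℂ] Y) : Y →ₗ[ℂ] Y)) with hn
  have hmn : m ≤ n := hcon.le
  set bφ := Module.finBasis ℂ (LinearMap.ker ((1 - S : X →L[ℂ] X) : X →ₗ[ℂ] X)) with hbφ
  set bψ := Module.finBasis ℂ (LinearMap.ker ((1 - St : Y →L[ℂ] Y) : Y →ₗ[ℂ] Y)) with hbψ
  set φ : Fin m → X := fun i => ((bφ i : LinearMap.ker ((1 - S : X →L[ℂ] X) : X →ₗ[ℂ] X)) : X) with hφ
  set ψ : Fin n → Y := fun i => ((bψ i : LinearMap.ker ((1 - St : Y →L[ℂ] Y) : Y →ₗ[ℂ] Y)) : Y) with hψ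
  have hφli : LinearIndependent ℂ φ :=
    bφ.linearIndependent.map' (Submodule.subtype _) (Submodule.ker_subtype _)
  have hψli : LinearIndependent ℂ ψ :=
    bψ.linearIndependent.map' (Submodule.subtype _) (Submodule.ker_subtype _)
  have hψmem : ∀ k, ψ k ∈ LinearMap.ker ((1 - St : Y →L[ℂ] Y) : Y →ₗ[ℂ] Y) := fun k => (bψ k).2
  obtain ⟨a, ha⟩ := exists_biorthogonal B hB₁ hφli
  have hB₂' : ∀ y : Y, (∀ x : X, B.flip y x = 0) → y = 0 := by
    intro y hy
    exact hB₂ y (fun x => by simpa using hy x)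
  obtain ⟨b, hb⟩ := exists_biorthogonal B.flip hB₂' hψli
  have hb' : ∀ (j : Fin n) (i : Fin n), B (b j) (ψ i) = if i = j then 1 else 0 := by
    intro j i
    have := hb i j
    simpa using this
  set cst : Fin m → Fin n := Fin.castLE hmn with hcst
  have hcstinj : Function.Injective cst := by
    intro p q h
    apply Fin.ext
    simpa [hcst] using congrArg Fin.val h
  set Fop : X →L[ℂ] X := ∑ i : Fin m, (B.flip (a i)).smulRight (b (cst i)) with hFop
  have hFapp : ∀ x : X, Fop x = ∑ i : Fin m, B x (a i) • b (cst i) := by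
    intro x
    rw [hFop]
    simp [ContinuousLinearMap.sum_apply, ContinuousLinearMap.smulRight_apply,
      ContinuousLinearMap.flip_apply]
  have hBF : ∀ (x : X) (k : Fin n),
      B (Fop x) (ψ k) = ∑ i : Fin m, B x (a i) * (if k = cst i then 1 else 0) := by
    intro x k
    rw [hFapp, map_sum, ContinuousLinearMap.sum_apply]
    refine Finset.sum_congr rfl fun i _ => ?_
    rw [map_smul, ContinuousLinearMap.smul_apply, smul_eq_mul, hb']
  have hBFj : ∀ (x : X) (j : Fin m), B (Fop x) (ψ (cst j)) = B x (a j) := by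
    intro x j
    rw [hBF]
    have : ∀ i : Fin m, (if cst j = cst i then (1:ℂ) else 0) = if j = i then 1 else 0 := by
      intro i
      by_cases h : j = i
      · simp [h]
      · have : cst j ≠ cst i := fun hc => h (hcstinj hc)
        simp [h, this]
    simp only [this]
    simp [mul_ite, Finset.sum_ite_eq]
  have hFcompact : IsCompactOperator ⇑Fop :=
    isCompactOperator_sum _ _ (fun i _ => isCompactOperator_smulRight _ _)
  have hSF : IsCompactOperator ⇑(S + Fop) := by
    have hco : ⇑(S + Fop) = ⇑S + ⇑Fop := by ext x; simp
    rw [hco]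
    exact hS.add hFcompact
  have hinj : Function.Injective ⇑(1 - (S + Fop)) := by
    rw [injective_iff_map_eq_zero]
    intro x hx
    rw [one_sub_apply'] at hx
    have hxe : x - S x = Fop x := by
      have : S x + Fop x = (S + Fop) x := by simp
      rw [← sub_eq_zero]
      rw [← this] at hx
      calc x - S x - Fop x = x - (S x + Fop x) := by abel
        _ = 0 := hx
    have hzero : ∀ j : Fin m, B x (a j) = 0 := by
      intro j
      have h1 : B (x - S x) (ψ (cst j)) = 0 := pair_ker B S St hadj (hψmem (cst j)) x
      rw [hxe, hBFj] at h1
      exact h1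
    have hF0 : Fop x = 0 := by
      rw [hFapp]
      refine Finset.sum_eq_zero fun i _ => ?_
      rw [hzero i, zero_smul]
    have hker : x ∈ LinearMap.ker ((1 - S : X →L[ℂ] X) : X →ₗ[ℂ] X) := by
      have : (1 - S) x = 0 := by rw [one_sub_apply', hxe, hF0]
      exact this
    have hrepr := bφ.sum_repr ⟨x, hker⟩
    set c : Fin m → ℂ := fun i => bφ.repr ⟨x, hker⟩ i with hc
    have hxsum : x = ∑ i, c i • φ i := by
      have h := congrArg (Subtype.val : LinearMap.ker ((1 - S : X →L[ℂ] X) : X →ₗ[ℂ] X) → X) hrepr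
      rw [show (Subtype.val (⟨x, hker⟩ : LinearMap.ker ((1 - S : X →L[ℂ] X) : X →ₗ[ℂ] X))) = x from rfl] at h
      rw [← h]
      simp [hφ, hc]
      exact Submodule.coe_sum (p := LinearMap.ker ((1 - S : X →L[ℂ] X) : X →ₗ[ℂ] X)) _ _
    have hcj : ∀ j, c j = 0 := by
      intro j
      have h2 : B x (a j) = ∑ i, c i * B (φ i) (a j) := by
        rw [hxsum, map_sum, ContinuousLinearMap.sum_apply]
        refine Finset.sum_congr rfl fun i _ => ?_
        rw [map_smul, ContinuousLinearMap.smul_apply, smul_eq_mul]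
      have h3 : (∑ i, c i * B (φ i) (a j)) = c j := by
        simp only [ha]
        simp [mul_ite, Finset.sum_ite_eq']
      rw [← h3, ← h2]
      exact hzero j
    rw [hxsum]
    refine Finset.sum_eq_zero fun i _ => ?_
    rw [hcj i, zero_smul]
  -- now derive the contradiction
  set jstar : Fin n := ⟨m, hcon⟩ with hjstar
  obtain ⟨x, hx⟩ := surjective_one_sub (S + Fop) hSF hinj (b jstar)
  rw [one_sub_apply'] at hx
  have hxe : x - S x - Fop x = b jstar := by
    have : S x + Fop x = (S + Fop) x := by simp
    rw [← this] at hx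
    calc x - S x - Fop x = x - (S x + Fop x) := by abel
      _ = b jstar := hx
  have h1 : B (x - S x) (ψ jstar) = 0 := pair_ker B S St hadj (hψmem jstar) x
  have h2 : B (Fop x) (ψ jstar) = 0 := by
    rw [hBF]
    refine Finset.sum_eq_zero fun i _ => ?_
    have : jstar ≠ cst i := by
      intro h
      have := congrArg Fin.val h
      simp [hjstar, hcst] at this
      omega
    simp [this]
  have h3 : B (x - S x - Fop x) (ψ jstar) = 0 := by
    rw [map_sub, ContinuousLinearMap.sub_apply, h1, h2, sub_zero]
  rw [hxe] at h3
  rw [hb'] at h3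
  simp at h3
end Main


/-- Fredholm alternative in a duality pairing (Wendland's form): let `X, Y` be complex
Banach spaces with a continuous nondegenerate bilinear pairing `B`, and let `T : X → X`
and `Tᵗ : Y → Y` be compact operators adjoint to each other with respect to `B`. Then
`(-½ I + T)φ = g` is solvable for `φ ∈ X` if and only if `⟨g, ψ⟩ = 0` for every `ψ ∈ Y`
with `(-½ I + Tᵗ)ψ = 0`. -/
theorem stmt18 (X Y : Type*) [NormedAddCommGroup X] [NormedSpace ℂ X] [CompleteSpace X]
    [NormedAddCommGroup Y] [NormedSpace ℂ Y] [CompleteSpace Y]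
    (B : X →L[ℂ] Y →L[ℂ] ℂ)
    (hB₁ : ∀ x : X, (∀ y : Y, B x y = 0) → x = 0)
    (hB₂ : ∀ y : Y, (∀ x : X, B x y = 0) → y = 0)
    (T : X →L[ℂ] X) (Tt : Y →L[ℂ] Y)
    (hT : IsCompactOperator (⇑T)) (hTt : IsCompactOperator (⇑Tt))
    (hadj : ∀ (x : X) (y : Y), B (T x) y = B x (Tt y))
    (g : X) :
    (∃ φ : X, (-(1 / 2 : ℂ)) • φ + T φ = g) ↔
      ∀ ψ : Y, (-(1 / 2 : ℂ)) • ψ + Tt ψ = 0 → B g ψ = 0 := by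
  constructor
  · rintro ⟨φ0, rfl⟩ ψ hψ
    have hTt' : Tt ψ = (1/2 : ℂ) • ψ := by
      have h := hψ
      rw [add_comm] at h
      have h2 := add_eq_zero_iff_eq_neg.1 h
      rw [h2, neg_smul, neg_neg]
    rw [map_add, ContinuousLinearMap.add_apply, map_smul, ContinuousLinearMap.smul_apply,
      hadj, hTt', map_smul]
    simp [smul_eq_mul]
  · intro h
    set S : X →L[ℂ] X := (2:ℂ) • T with hSdef
    set St : Y →L[ℂ] Y := (2:ℂ) • Tt with hStdef
    have hSc : IsCompactOperator ⇑S := by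
      have h2 := hT.smul (2:ℂ)
      have : ⇑S = (2:ℂ) • ⇑T := by ext x; simp [hSdef]
      rw [this]; exact h2
    have hStc : IsCompactOperator ⇑St := by
      have h2 := hTt.smul (2:ℂ)
      have : ⇑St = (2:ℂ) • ⇑Tt := by ext x; simp [hStdef]
      rw [this]; exact h2
    have hadj' : ∀ x y, B (S x) y = B x (St y) := by
      intro x y
      have h1 : S x = (2:ℂ) • T x := rfl
      have h2 : St y = (2:ℂ) • Tt y := rfl
      rw [h1, h2, map_smul, map_smul, ContinuousLinearMap.smul_apply, hadj]
    have hscale : ∀ ψ : Y, (-(1/2 : ℂ)) • ψ + Tt ψ = (-(1/2 : ℂ)) • ((1 - St) ψ) := by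
      intro ψ
      have h1 : (1 - St) ψ = ψ - (2:ℂ) • Tt ψ := by
        rw [one_sub_apply']; rfl
      rw [h1]
      module
    have hB₁' : ∀ y : Y, (∀ x : X, B.flip y x = 0) → y = 0 := by
      intro y hy; exact hB₂ y (fun x => by simpa using hy x)
    have hB₂' : ∀ x : X, (∀ y : Y, B.flip y x = 0) → x = 0 := by
      intro x hx; exact hB₁ x (fun y => by simpa using hx y)
    have hadjflip : ∀ (y : Y) (x : X), B.flip (St y) x = B.flip y (S x) := by
      intro y x
      simpa [ContinuousLinearMap.flip_apply] using (hadj' x y).symm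
    have hmn : Module.finrank ℂ (LinearMap.ker ((1 - S : X →L[ℂ] X) : X →ₗ[ℂ] X)) ≤
        Module.finrank ℂ (LinearMap.ker ((1 - St : Y →L[ℂ] Y) : Y →ₗ[ℂ] Y)) :=
      dim_le B.flip hB₁' hB₂' St S hStc hSc hadjflip
    have hg : ∀ ψ, (1 - St) ψ = 0 → B ((-2 : ℂ) • g) ψ = 0 := by
      intro ψ hψ0
      have hker : (-(1/2 : ℂ)) • ψ + Tt ψ = 0 := by
        rw [hscale ψ, hψ0, smul_zero]
      have := h ψ hker
      rw [map_smul, ContinuousLinearMap.smul_apply, this, smul_zero]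
    obtain ⟨x, hx⟩ := key_solvable B hB₁ hB₂ S St hSc hStc hadj' hmn ((-2 : ℂ) • g) hg
    rw [one_sub_apply'] at hx
    have hx' : x - (2:ℂ) • T x = (-2 : ℂ) • g := by
      rw [← hx]; rfl
    refine ⟨x, ?_⟩
    have hgrew : g = (-(1/2 : ℂ)) • ((-2 : ℂ) • g) := by module
    rw [hgrew, ← hx']
    module
end
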